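/- arXiv:1904.01122 — 2 statements merged into one kernel-verified Lean document; each statement's English description precedes it below -/
import Mathlib

section
/- Let U ⊆ ℝ³ be open, let α > 0, let ζ : U → ℝ³ be twice continuously differentiable with everywhere invertible Jacobian Dζ and 𝒥 = det Dζ > 0, set 𝒜 = [Dζ]^{-1}, and let w : U → (0,∞) be continuously differentiable. Then for each i ∈ {1,2,3}: Σ_k ∂_k( w^{1+α} 𝒜^k_i 𝒥^{-1/α} ) = (1+α) w^α Σ_k 𝒜^k_i ∂_k( w 𝒥^{-1/α} ) everywhere on U. -/
/-- Partial derivative `∂_j f` of a scalar function on `ℝ³`. -/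
noncomputable def pd (j : Fin 3) (f : (Fin 3 → ℝ) → ℝ) (x : Fin 3 → ℝ) : ℝ :=
  fderiv ℝ f x (Pi.single j 1)

/-- Jacobian matrix `Dζ`, entries `[Dζ]^i_j = ∂_j ζ^i`. -/
noncomputable def jacM (ζ : (Fin 3 → ℝ) → (Fin 3 → ℝ)) (x : Fin 3 → ℝ) :
    Matrix (Fin 3) (Fin 3) ℝ :=
  Matrix.of fun i j => pd j (fun y => ζ y i) x


/-- entry function of the Jacobian -/
noncomputable def aent (ζ : (Fin 3 → ℝ) → (Fin 3 → ℝ)) (r c : Fin 3) : (Fin 3 → ℝ) → ℝ :=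
  fun y => pd c (fun z => ζ z r) y

lemma jacM_apply (ζ : (Fin 3 → ℝ) → (Fin 3 → ℝ)) (y : Fin 3 → ℝ) (r c : Fin 3) :
    jacM ζ y r c = aent ζ r c y := rfl

lemma pd_congr {f g : (Fin 3 → ℝ) → ℝ} {x : Fin 3 → ℝ} (h : f =ᶠ[nhds x] g) (k : Fin 3) :
    pd k f x = pd k g x := by
  unfold pd; rw [h.fderiv_eq]

lemma pd_of_hasFDerivAt {f : (Fin 3 → ℝ) → ℝ} {f' : (Fin 3 → ℝ) →L[ℝ] ℝ} {x : Fin 3 → ℝ}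
    (h : HasFDerivAt f f' x) (k : Fin 3) : pd k f x = f' (Pi.single k 1) := by
  unfold pd; rw [h.fderiv]

lemma pd_mul {f g : (Fin 3 → ℝ) → ℝ} {x : Fin 3 → ℝ}
    (hf : DifferentiableAt ℝ f x) (hg : DifferentiableAt ℝ g x) (k : Fin 3) :
    pd k (fun y => f y * g y) x = pd k f x * g x + f x * pd k g x := by
  unfold pd
  rw [fderiv_fun_mul hf hg]
  simp [ContinuousLinearMap.add_apply, ContinuousLinearMap.smul_apply, smul_eq_mul]
  ring

lemma pd_rpow {f : (Fin 3 → ℝ) → ℝ} {x : Fin 3 → ℝ} {p : ℝ}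
    (hf : DifferentiableAt ℝ f x) (h0 : f x ≠ 0) (k : Fin 3) :
    pd k (fun y => f y ^ p) x = p * f x ^ (p - 1) * pd k f x := by
  rw [pd_of_hasFDerivAt (hf.hasFDerivAt.rpow_const (Or.inl h0)) k]
  simp [pd, mul_assoc]

lemma pd_mulsub {p q r s : (Fin 3 → ℝ) → ℝ} {x : Fin 3 → ℝ}
    (hp : DifferentiableAt ℝ p x) (hq : DifferentiableAt ℝ q x)
    (hr : DifferentiableAt ℝ r x) (hs : DifferentiableAt ℝ s x) (k : Fin 3) :
    pd k (fun y => p y * q y - r y * s y) x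
      = (pd k p x * q x + p x * pd k q x) - (pd k r x * s x + r x * pd k s x) := by
  unfold pd
  rw [fderiv_fun_sub (f := fun y => p y * q y) (g := fun y => r y * s y) ((hp.mul hq)) ((hr.mul hs)), fderiv_fun_mul hp hq, fderiv_fun_mul hr hs]
  simp [ContinuousLinearMap.sub_apply, ContinuousLinearMap.add_apply,
    ContinuousLinearMap.smul_apply, smul_eq_mul]
  ring

lemma pd_negaddmul {p q r s : (Fin 3 → ℝ) → ℝ} {x : Fin 3 → ℝ}
    (hp : DifferentiableAt ℝ p x) (hq : DifferentiableAt ℝ q x)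
    (hr : DifferentiableAt ℝ r x) (hs : DifferentiableAt ℝ s x) (k : Fin 3) :
    pd k (fun y => -(p y * q y) + r y * s y) x
      = -(pd k p x * q x + p x * pd k q x) + (pd k r x * s x + r x * pd k s x) := by
  unfold pd
  rw [fderiv_fun_add (f := fun y => -(p y * q y)) (g := fun y => r y * s y) ((hp.mul hq).neg) ((hr.mul hs)), fderiv_fun_neg, fderiv_fun_mul hp hq, fderiv_fun_mul hr hs]
  simp [ContinuousLinearMap.add_apply, ContinuousLinearMap.neg_apply,
    ContinuousLinearMap.smul_apply, smul_eq_mul]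
  ring
set_option maxHeartbeats 2000000 in
/-- **The pressure term is a perfect ζ-gradient.**  For `ζ : U → ℝ³` that is `C²` with
invertible Jacobian and `𝒥 = det Dζ > 0`, `𝒜 = [Dζ]⁻¹`, and `w > 0` of class `C¹`,
`Σ_k ∂_k (w^{1+α} 𝒜^k_i 𝒥^{-1/α}) = (1+α) w^α Σ_k 𝒜^k_i ∂_k (w 𝒥^{-1/α})` on `U`. -/
theorem pressure_gradient_identity
    (U : Set (Fin 3 → ℝ)) (hU : IsOpen U) (α : ℝ) (hα : 0 < α)
    (ζ : (Fin 3 → ℝ) → (Fin 3 → ℝ)) (hζ : ContDiffOn ℝ 2 ζ U)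
    (hinv : ∀ x ∈ U, IsUnit (jacM ζ x))
    (hJpos : ∀ x ∈ U, 0 < (jacM ζ x).det)
    (w : (Fin 3 → ℝ) → ℝ) (hw : ContDiffOn ℝ 1 w U) (hwpos : ∀ x ∈ U, 0 < w x) :
    ∀ i : Fin 3, ∀ x ∈ U,
      (∑ k : Fin 3, pd k
          (fun y => w y ^ (1 + α) * ((jacM ζ y)⁻¹ k i) * ((jacM ζ y).det) ^ (-1 / α)) x)
        = (1 + α) * w x ^ α *
            ∑ k : Fin 3, ((jacM ζ x)⁻¹ k i) *
              pd k (fun y => w y * ((jacM ζ y).det) ^ (-1 / α)) x := by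
  intro i x hx
  have hxmem : U ∈ nhds x := hU.mem_nhds hx
  have hfr : ∀ r : Fin 3, ContDiffOn ℝ 2 (fun y => ζ y r) U := fun r =>
    (ContinuousLinearMap.proj r : ((Fin 3) → ℝ) →L[ℝ] ℝ).contDiff.comp_contDiffOn hζ
  have hfr_diff : ∀ r : Fin 3, ∀ y ∈ U, DifferentiableAt ℝ (fun z => ζ z r) y := fun r y hy =>
    ((hfr r).differentiableOn (by norm_num)).differentiableAt (hU.mem_nhds hy)
  have hfr1 : ∀ r : Fin 3, ContDiffOn ℝ 1 (fun y => fderiv ℝ (fun z => ζ z r) y) U :=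
    fun r => (hfr r).fderiv_of_isOpen hU (by norm_num)
  have haC1 : ∀ r c : Fin 3, ContDiffOn ℝ 1 (aent ζ r c) U := by
    intro r c
    exact (ContinuousLinearMap.apply ℝ ℝ (Pi.single c 1)).contDiff.comp_contDiffOn (hfr1 r)
  have haDiff : ∀ r c : Fin 3, DifferentiableAt ℝ (aent ζ r c) x := fun r c =>
    ((haC1 r c).differentiableOn (by norm_num)).differentiableAt hxmem
  have hsym : ∀ r c k : Fin 3, pd k (aent ζ r c) x = pd c (aent ζ r k) x := by
    intro r c k
    have hF'diff : DifferentiableAt ℝ (fun y => fderiv ℝ (fun z => ζ z r) y) x :=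
      ((hfr1 r).differentiableOn (by norm_num)).differentiableAt hxmem
    have hev : ∀ᶠ y in nhds x, HasFDerivAt (fun z => ζ z r) (fderiv ℝ (fun z => ζ z r) y) y := by
      filter_upwards [hxmem] with y hy using (hfr_diff r y hy).hasFDerivAt
    have h2 := second_derivative_symmetric_of_eventually hev hF'diff.hasFDerivAt
      (Pi.single k 1) (Pi.single c 1)
    have hc : HasFDerivAt (aent ζ r c)
        ((ContinuousLinearMap.apply ℝ ℝ (Pi.single c 1)).comp
          (fderiv ℝ (fun y => fderiv ℝ (fun z => ζ z r) y) x)) x := by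
      have h := (ContinuousLinearMap.apply ℝ ℝ (Pi.single c 1)).hasFDerivAt.comp x
        hF'diff.hasFDerivAt
      exact h
    have hk : HasFDerivAt (aent ζ r k)
        ((ContinuousLinearMap.apply ℝ ℝ (Pi.single k 1)).comp
          (fderiv ℝ (fun y => fderiv ℝ (fun z => ζ z r) y) x)) x := by
      have h := (ContinuousLinearMap.apply ℝ ℝ (Pi.single k 1)).hasFDerivAt.comp x
        hF'diff.hasFDerivAt
      exact h
    show fderiv ℝ (aent ζ r c) x (Pi.single k 1) = fderiv ℝ (aent ζ r k) x (Pi.single c 1)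
    rw [hc.fderiv, hk.fderiv]
    simpa using h2
  have hdetfun : ∀ y, (jacM ζ y).det =
      aent ζ 0 0 y * aent ζ 1 1 y * aent ζ 2 2 y - aent ζ 0 0 y * aent ζ 1 2 y * aent ζ 2 1 y
      - aent ζ 0 1 y * aent ζ 1 0 y * aent ζ 2 2 y + aent ζ 0 1 y * aent ζ 1 2 y * aent ζ 2 0 y
      + aent ζ 0 2 y * aent ζ 1 0 y * aent ζ 2 1 y - aent ζ 0 2 y * aent ζ 1 1 y * aent ζ 2 0 y :=
    fun y => by rw [Matrix.det_fin_three]; rfl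
  have hadjmat : ∀ y, (jacM ζ y).adjugate =
      !![aent ζ 1 1 y * aent ζ 2 2 y - aent ζ 1 2 y * aent ζ 2 1 y,
        -(aent ζ 0 1 y * aent ζ 2 2 y) + aent ζ 0 2 y * aent ζ 2 1 y,
        aent ζ 0 1 y * aent ζ 1 2 y - aent ζ 0 2 y * aent ζ 1 1 y;
        -(aent ζ 1 0 y * aent ζ 2 2 y) + aent ζ 1 2 y * aent ζ 2 0 y,
        aent ζ 0 0 y * aent ζ 2 2 y - aent ζ 0 2 y * aent ζ 2 0 y,
        -(aent ζ 0 0 y * aent ζ 1 2 y) + aent ζ 0 2 y * aent ζ 1 0 y;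
        aent ζ 1 0 y * aent ζ 2 1 y - aent ζ 1 1 y * aent ζ 2 0 y,
        -(aent ζ 0 0 y * aent ζ 2 1 y) + aent ζ 0 1 y * aent ζ 2 0 y,
        aent ζ 0 0 y * aent ζ 1 1 y - aent ζ 0 1 y * aent ζ 1 0 y] :=
    fun y => by rw [Matrix.adjugate_fin_three]; rfl
  have hdetDiff : DifferentiableAt ℝ (fun y => (jacM ζ y).det) x := by
    have : (fun y => (jacM ζ y).det) = fun y =>
      aent ζ 0 0 y * aent ζ 1 1 y * aent ζ 2 2 y - aent ζ 0 0 y * aent ζ 1 2 y * aent ζ 2 1 y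
      - aent ζ 0 1 y * aent ζ 1 0 y * aent ζ 2 2 y + aent ζ 0 1 y * aent ζ 1 2 y * aent ζ 2 0 y
      + aent ζ 0 2 y * aent ζ 1 0 y * aent ζ 2 1 y - aent ζ 0 2 y * aent ζ 1 1 y * aent ζ 2 0 y :=
      funext hdetfun
    rw [this]
    exact ((((((((haDiff 0 0).mul (haDiff 1 1)).mul (haDiff 2 2)).sub
      (((haDiff 0 0).mul (haDiff 1 2)).mul (haDiff 2 1))).sub
      (((haDiff 0 1).mul (haDiff 1 0)).mul (haDiff 2 2))).add
      (((haDiff 0 1).mul (haDiff 1 2)).mul (haDiff 2 0))).add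
      (((haDiff 0 2).mul (haDiff 1 0)).mul (haDiff 2 1))).sub
      (((haDiff 0 2).mul (haDiff 1 1)).mul (haDiff 2 0)))
  have hA00 : (fun y => (jacM ζ y).adjugate 0 0) = fun y => aent ζ 1 1 y * aent ζ 2 2 y - aent ζ 1 2 y * aent ζ 2 1 y := by
    funext y; rw [hadjmat y]; simp
  have hA01 : (fun y => (jacM ζ y).adjugate 0 1) = fun y => -(aent ζ 0 1 y * aent ζ 2 2 y) + aent ζ 0 2 y * aent ζ 2 1 y := by
    funext y; rw [hadjmat y]; simp
  have hA02 : (fun y => (jacM ζ y).adjugate 0 2) = fun y => aent ζ 0 1 y * aent ζ 1 2 y - aent ζ 0 2 y * aent ζ 1 1 y := by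
    funext y; rw [hadjmat y]; simp
  have hA10 : (fun y => (jacM ζ y).adjugate 1 0) = fun y => -(aent ζ 1 0 y * aent ζ 2 2 y) + aent ζ 1 2 y * aent ζ 2 0 y := by
    funext y; rw [hadjmat y]; simp
  have hA11 : (fun y => (jacM ζ y).adjugate 1 1) = fun y => aent ζ 0 0 y * aent ζ 2 2 y - aent ζ 0 2 y * aent ζ 2 0 y := by
    funext y; rw [hadjmat y]; simp
  have hA12 : (fun y => (jacM ζ y).adjugate 1 2) = fun y => -(aent ζ 0 0 y * aent ζ 1 2 y) + aent ζ 0 2 y * aent ζ 1 0 y := by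
    funext y; rw [hadjmat y]; simp
  have hA20 : (fun y => (jacM ζ y).adjugate 2 0) = fun y => aent ζ 1 0 y * aent ζ 2 1 y - aent ζ 1 1 y * aent ζ 2 0 y := by
    funext y; rw [hadjmat y]; simp
  have hA21 : (fun y => (jacM ζ y).adjugate 2 1) = fun y => -(aent ζ 0 0 y * aent ζ 2 1 y) + aent ζ 0 1 y * aent ζ 2 0 y := by
    funext y; rw [hadjmat y]; simp
  have hA22 : (fun y => (jacM ζ y).adjugate 2 2) = fun y => aent ζ 0 0 y * aent ζ 1 1 y - aent ζ 0 1 y * aent ζ 1 0 y := by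
    funext y; rw [hadjmat y]; simp
  have hD00 : DifferentiableAt ℝ (fun y => (jacM ζ y).adjugate 0 0) x := by
    rw [hA00]
    exact ((haDiff 1 1).mul (haDiff 2 2)).sub ((haDiff 1 2).mul (haDiff 2 1))
  have hD01 : DifferentiableAt ℝ (fun y => (jacM ζ y).adjugate 0 1) x := by
    rw [hA01]
    exact (((haDiff 0 1).mul (haDiff 2 2)).neg).add ((haDiff 0 2).mul (haDiff 2 1))
  have hD02 : DifferentiableAt ℝ (fun y => (jacM ζ y).adjugate 0 2) x := by
    rw [hA02]
    exact ((haDiff 0 1).mul (haDiff 1 2)).sub ((haDiff 0 2).mul (haDiff 1 1))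
  have hD10 : DifferentiableAt ℝ (fun y => (jacM ζ y).adjugate 1 0) x := by
    rw [hA10]
    exact (((haDiff 1 0).mul (haDiff 2 2)).neg).add ((haDiff 1 2).mul (haDiff 2 0))
  have hD11 : DifferentiableAt ℝ (fun y => (jacM ζ y).adjugate 1 1) x := by
    rw [hA11]
    exact ((haDiff 0 0).mul (haDiff 2 2)).sub ((haDiff 0 2).mul (haDiff 2 0))
  have hD12 : DifferentiableAt ℝ (fun y => (jacM ζ y).adjugate 1 2) x := by
    rw [hA12]
    exact (((haDiff 0 0).mul (haDiff 1 2)).neg).add ((haDiff 0 2).mul (haDiff 1 0))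
  have hD20 : DifferentiableAt ℝ (fun y => (jacM ζ y).adjugate 2 0) x := by
    rw [hA20]
    exact ((haDiff 1 0).mul (haDiff 2 1)).sub ((haDiff 1 1).mul (haDiff 2 0))
  have hD21 : DifferentiableAt ℝ (fun y => (jacM ζ y).adjugate 2 1) x := by
    rw [hA21]
    exact (((haDiff 0 0).mul (haDiff 2 1)).neg).add ((haDiff 0 1).mul (haDiff 2 0))
  have hD22 : DifferentiableAt ℝ (fun y => (jacM ζ y).adjugate 2 2) x := by
    rw [hA22]
    exact ((haDiff 0 0).mul (haDiff 1 1)).sub ((haDiff 0 1).mul (haDiff 1 0))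
  have hPiola0 : (∑ k, pd k (fun y => (jacM ζ y).adjugate k 0) x) = 0 := by
    rw [Fin.sum_univ_three, hA00, hA10, hA20]
    rw [pd_mulsub (haDiff 1 1) (haDiff 2 2) (haDiff 1 2) (haDiff 2 1) 0,
      pd_negaddmul (haDiff 1 0) (haDiff 2 2) (haDiff 1 2) (haDiff 2 0) 1,
      pd_mulsub (haDiff 1 0) (haDiff 2 1) (haDiff 1 1) (haDiff 2 0) 2]
    simp only [hsym 0 1 0, hsym 0 2 0, hsym 0 2 1, hsym 1 1 0, hsym 1 2 0, hsym 1 2 1, hsym 2 1 0, hsym 2 2 0, hsym 2 2 1]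
    ring
  have hPiola1 : (∑ k, pd k (fun y => (jacM ζ y).adjugate k 1) x) = 0 := by
    rw [Fin.sum_univ_three, hA01, hA11, hA21]
    rw [pd_negaddmul (haDiff 0 1) (haDiff 2 2) (haDiff 0 2) (haDiff 2 1) 0,
      pd_mulsub (haDiff 0 0) (haDiff 2 2) (haDiff 0 2) (haDiff 2 0) 1,
      pd_negaddmul (haDiff 0 0) (haDiff 2 1) (haDiff 0 1) (haDiff 2 0) 2]
    simp only [hsym 0 1 0, hsym 0 2 0, hsym 0 2 1, hsym 1 1 0, hsym 1 2 0, hsym 1 2 1, hsym 2 1 0, hsym 2 2 0, hsym 2 2 1]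
    ring
  have hPiola2 : (∑ k, pd k (fun y => (jacM ζ y).adjugate k 2) x) = 0 := by
    rw [Fin.sum_univ_three, hA02, hA12, hA22]
    rw [pd_mulsub (haDiff 0 1) (haDiff 1 2) (haDiff 0 2) (haDiff 1 1) 0,
      pd_negaddmul (haDiff 0 0) (haDiff 1 2) (haDiff 0 2) (haDiff 1 0) 1,
      pd_mulsub (haDiff 0 0) (haDiff 1 1) (haDiff 0 1) (haDiff 1 0) 2]
    simp only [hsym 0 1 0, hsym 0 2 0, hsym 0 2 1, hsym 1 1 0, hsym 1 2 0, hsym 1 2 1, hsym 2 1 0, hsym 2 2 0, hsym 2 2 1]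
    ring
  have hPiola : pd 0 (fun y => (jacM ζ y).adjugate 0 i) x
      + pd 1 (fun y => (jacM ζ y).adjugate 1 i) x
      + pd 2 (fun y => (jacM ζ y).adjugate 2 i) x = 0 := by
    have h0 := hPiola0; have h1 := hPiola1; have h2 := hPiola2
    rw [Fin.sum_univ_three] at h0 h1 h2
    fin_cases i
    · simpa using h0
    · simpa using h1
    · simpa using h2
  have hadjD : ∀ k : Fin 3, DifferentiableAt ℝ (fun y => (jacM ζ y).adjugate k i) x := by
    intro k; fin_cases k <;> fin_cases i <;> assumption
  have hD : 0 < (jacM ζ x).det := hJpos x hx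
  have hW : 0 < w x := hwpos x hx
  have hwdiff : DifferentiableAt ℝ w x :=
    (hw.differentiableOn (by norm_num)).differentiableAt hxmem
  have hgd1 : DifferentiableAt ℝ (fun y => w y ^ (1 + α)) x :=
    hwdiff.rpow_const (Or.inl hW.ne')
  have hgd2 : DifferentiableAt ℝ (fun y => (jacM ζ y).det ^ (-1 / α - 1)) x :=
    hdetDiff.rpow_const (Or.inl hD.ne')
  have hgd3 : DifferentiableAt ℝ (fun y => (jacM ζ y).det ^ (-1 / α)) x :=
    hdetDiff.rpow_const (Or.inl hD.ne')
  have hgdiff : DifferentiableAt ℝ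
      (fun y => w y ^ (1 + α) * (jacM ζ y).det ^ (-1 / α - 1)) x := hgd1.mul hgd2
  have hLk : ∀ k : Fin 3,
      pd k (fun y => w y ^ (1 + α) * ((jacM ζ y)⁻¹ k i) * ((jacM ζ y).det) ^ (-1 / α)) x
      = pd k (fun y =>
          (w y ^ (1 + α) * (jacM ζ y).det ^ (-1 / α - 1)) * (jacM ζ y).adjugate k i) x := by
    intro k
    apply pd_congr
    filter_upwards [hxmem] with y hy
    rw [Matrix.inv_def, Matrix.smul_apply, smul_eq_mul, Ring.inverse_eq_inv,
      Real.rpow_sub (hJpos y hy), Real.rpow_one, div_eq_mul_inv]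
    ring
  have einv : ∀ k : Fin 3,
      (jacM ζ x)⁻¹ k i = ((jacM ζ x).det)⁻¹ * (jacM ζ x).adjugate k i := by
    intro k
    rw [Matrix.inv_def, Matrix.smul_apply, smul_eq_mul, Ring.inverse_eq_inv]
  simp only [Fin.sum_univ_three]
  rw [hLk 0, hLk 1, hLk 2]
  simp only [pd_mul hgdiff (hadjD 0) 0, pd_mul hgdiff (hadjD 1) 1, pd_mul hgdiff (hadjD 2) 2,
    pd_mul hgd1 hgd2, pd_mul hwdiff hgd3,
    pd_rpow hwdiff hW.ne', pd_rpow hdetDiff hD.ne', einv]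
  rw [show (1 : ℝ) + α - 1 = α from by ring]
  rw [show w x ^ (1 + α) = w x * w x ^ α from by
    rw [Real.rpow_add hW, Real.rpow_one]]
  rw [show (jacM ζ x).det ^ (-1 / α - 1 - 1)
      = (jacM ζ x).det ^ (-1 / α) / (jacM ζ x).det / (jacM ζ x).det from by
    rw [Real.rpow_sub_one hD.ne', Real.rpow_sub_one hD.ne']]
  rw [show (jacM ζ x).det ^ (-1 / α - 1)
      = (jacM ζ x).det ^ (-1 / α) / (jacM ζ x).det from by
    rw [Real.rpow_sub_one hD.ne']]
  rw [show (-1 / α - 1 : ℝ) = (1 + α) * (-1 / α) from by field_simp; ring]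
  linear_combination (w x * w x ^ α *
    ((jacM ζ x).det ^ (-1 / α) / (jacM ζ x).det)) * hPiola
end

section
/- Let U ⊆ ℝ³ be open and let θ : U → ℝ³ be continuously differentiable such that ζ(x) = x + θ(x) has everywhere invertible Jacobian Dζ; set 𝒜 = [Dζ]^{-1}. Then for each k, i ∈ {1,2,3}, everywhere on U: 𝒜^k_i − δ^k_i = − 𝒜^k_j [∇_ζ θ]^i_j − 𝒜^k_j [Curl_ζ θ]^j_i − 𝒜^k_j 𝒜^l_p ∂_i θ^p ∂_l θ^j, where δ^k_i is the Kronecker delta and repeated indices j, l, p are summed from 1 to 3. -/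
open Matrix in
lemma key_matrix (A M : Matrix (Fin 3) (Fin 3) ℝ) (h : A * (1 + M) = 1) :
    A - 1 = -(A * (M * A)ᵀ) - (A * (M * A) - A * (M * A)ᵀ) - A * M * A * M := by
  have h1 : A + A * M = 1 := by rwa [mul_add, mul_one] at h
  have h2 : A * M = 1 - A := eq_sub_of_add_eq' h1
  have h3 : A * M * A + A * M * A * M = A * M := by
    calc A * M * A + A * M * A * M = A * M * (A + A * M) := by noncomm_ring
      _ = A * M * 1 := by rw [h1]
      _ = A * M := mul_one _
  have h4 : -(A * (M * A)ᵀ) - (A * (M * A) - A * (M * A)ᵀ) - A * M * A * M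
      = -(A * M * A + A * M * A * M) := by noncomm_ring
  rw [h4, h3, h2, neg_sub]


/-- **Decomposition of `𝒜 − I`.**  For `ζ = id + θ` with invertible Jacobian,
`𝒜^k_i − δ^k_i = −𝒜^k_j [∇_ζθ]^i_j − 𝒜^k_j [Curl_ζθ]^j_i − 𝒜^k_j 𝒜^l_p ∂_iθ^p ∂_lθ^j`. -/
theorem Ainv_minus_id_decomposition
    (U : Set (Fin 3 → ℝ)) (hU : IsOpen U)
    (θ : (Fin 3 → ℝ) → (Fin 3 → ℝ)) (hθ : ContDiffOn ℝ 1 θ U)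
    (hinv : ∀ x ∈ U, IsUnit (jacM (fun y => y + θ y) x)) :
    ∀ x ∈ U, ∀ k i : Fin 3,
      (jacM (fun y => y + θ y) x)⁻¹ k i - (if k = i then (1:ℝ) else 0)
        = -(∑ j : Fin 3, ((jacM (fun y => y + θ y) x)⁻¹ k j) *
              (∑ l : Fin 3, ((jacM (fun y => y + θ y) x)⁻¹ l j) *
                pd l (fun y => θ y i) x))
          - (∑ j : Fin 3, ((jacM (fun y => y + θ y) x)⁻¹ k j) *
              (∑ s : Fin 3,
                (((jacM (fun y => y + θ y) x)⁻¹ s i) * pd s (fun y => θ y j) x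
                  - ((jacM (fun y => y + θ y) x)⁻¹ s j) * pd s (fun y => θ y i) x)))
          - (∑ j : Fin 3, ∑ l : Fin 3, ∑ p : Fin 3,
              ((jacM (fun y => y + θ y) x)⁻¹ k j) *
                ((jacM (fun y => y + θ y) x)⁻¹ l p) *
                pd i (fun y => θ y p) x * pd l (fun y => θ y j) x) := by
  intro x hx k i
  have hdθ : DifferentiableAt ℝ θ x :=
    (hθ.differentiableOn one_ne_zero).differentiableAt (hU.mem_nhds hx)
  have hdc : ∀ a : Fin 3, DifferentiableAt ℝ (fun y => θ y a) x :=
    fun a => (differentiableAt_pi.1 hdθ) a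
  set Mm : Matrix (Fin 3) (Fin 3) ℝ :=
    Matrix.of (fun a b => pd b (fun y => θ y a) x) with hMm
  set A := (jacM (fun y => y + θ y) x)⁻¹ with hA
  have hJ : jacM (fun y => y + θ y) x = 1 + Mm := by
    ext a b
    show pd b (fun y => (y + θ y) a) x = (1 : Matrix (Fin 3) (Fin 3) ℝ) a b + Mm a b
    have heq : (fun y : Fin 3 → ℝ => (y + θ y) a) = fun y => y a + θ y a := rfl
    have hd1 : DifferentiableAt ℝ (fun y : Fin 3 → ℝ => y a) x :=
      (ContinuousLinearMap.proj a : (Fin 3 → ℝ) →L[ℝ] ℝ).differentiableAt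
    unfold pd
    rw [heq, fderiv_fun_add hd1 (hdc a)]
    have hf1 : fderiv ℝ (fun y : Fin 3 → ℝ => y a) x
        = (ContinuousLinearMap.proj a : (Fin 3 → ℝ) →L[ℝ] ℝ) :=
      (ContinuousLinearMap.proj a : (Fin 3 → ℝ) →L[ℝ] ℝ).fderiv
    simp [hf1, Matrix.one_apply, Pi.single_apply, pd, hMm]
  have hu : IsUnit (jacM (fun y => y + θ y) x).det :=
    (Matrix.isUnit_iff_isUnit_det _).1 (hinv x hx)
  have hAJ : A * jacM (fun y => y + θ y) x = 1 := Matrix.nonsing_inv_mul _ hu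
  rw [hJ] at hAJ
  have hE := congrFun (congrFun (key_matrix A Mm hAJ) k) i
  simp only [Matrix.sub_apply, Matrix.neg_apply, Matrix.one_apply, Matrix.mul_apply,
    Matrix.transpose_apply, Matrix.of_apply, hMm, Fin.sum_univ_three] at hE
  simp only [Fin.sum_univ_three]
  linear_combination hE
end
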